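/- For all real x with 0 < |x| < π/2, one has x/sin x + ((x/2)/tan(x/2))² < 2 + ((π² + 8π − 32)/(2π³))·x³·sin x. -/

import Mathlib

open Real

lemma aux_nonneg {F F' : ℝ → ℝ} (hd : ∀ t, HasDerivAt F (F' t) t) (h0 : F 0 = 0)
    (hF' : ∀ t, 0 ≤ t → 0 ≤ F' t) {x : ℝ} (hx : 0 ≤ x) : 0 ≤ F x := by
  have hmono : MonotoneOn F (Set.Ici 0) := by
    apply monotoneOn_of_deriv_nonneg (convex_Ici 0)
    · exact fun t _ => (hd t).continuousAt.continuousWithinAt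
    · exact fun t _ => (hd t).differentiableAt.differentiableWithinAt
    · intro t ht
      rw [interior_Ici] at ht
      rw [(hd t).deriv]
      exact hF' t (le_of_lt ht)
  calc (0:ℝ) = F 0 := h0.symm
  _ ≤ F x := hmono Set.self_mem_Ici hx hx

lemma sin_lb3 (x : ℝ) (hx : 0 ≤ x) : x - x^3/6 ≤ Real.sin x := by
  have h := aux_nonneg (F := fun t => Real.sin t - (t - t^3/6))
    (F' := fun t => Real.cos t - (1 - t^2/2))
    (fun t => by
      have h := (Real.hasDerivAt_sin t).sub ((hasDerivAt_id t).sub ((hasDerivAt_pow 3 t).div_const 6))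
      refine h.congr_deriv ?_; push_cast; ring)
    (by simp)
    (fun t ht => by have := Real.one_sub_sq_div_two_le_cos (x := t); linarith) hx
  linarith

lemma cos_ub4 (x : ℝ) (hx : 0 ≤ x) : Real.cos x ≤ 1 - x^2/2 + x^4/24 := by
  have h := aux_nonneg (F := fun t => (1 - t^2/2 + t^4/24) - Real.cos t)
    (F' := fun t => Real.sin t - (t - t^3/6))
    (fun t => by
      have h := (((hasDerivAt_const t (1:ℝ)).sub ((hasDerivAt_pow 2 t).div_const 2)).add
        ((hasDerivAt_pow 4 t).div_const 24)).sub (Real.hasDerivAt_cos t)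
      refine h.congr_deriv ?_; push_cast; ring)
    (by simp)
    (fun t ht => by have := sin_lb3 t ht; linarith) hx
  linarith

lemma sin_ub5 (x : ℝ) (hx : 0 ≤ x) : Real.sin x ≤ x - x^3/6 + x^5/120 := by
  have h := aux_nonneg (F := fun t => (t - t^3/6 + t^5/120) - Real.sin t)
    (F' := fun t => (1 - t^2/2 + t^4/24) - Real.cos t)
    (fun t => by
      have h := (((hasDerivAt_id t).sub ((hasDerivAt_pow 3 t).div_const 6)).add
        ((hasDerivAt_pow 5 t).div_const 120)).sub (Real.hasDerivAt_sin t)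
      refine h.congr_deriv ?_; push_cast; ring)
    (by simp)
    (fun t ht => by have := cos_ub4 t ht; linarith) hx
  linarith

lemma cos_lb6 (x : ℝ) (hx : 0 ≤ x) : 1 - x^2/2 + x^4/24 - x^6/720 ≤ Real.cos x := by
  have h := aux_nonneg (F := fun t => Real.cos t - (1 - t^2/2 + t^4/24 - t^6/720))
    (F' := fun t => (t - t^3/6 + t^5/120) - Real.sin t)
    (fun t => by
      have h := (Real.hasDerivAt_cos t).sub ((((hasDerivAt_const t (1:ℝ)).sub
        ((hasDerivAt_pow 2 t).div_const 2)).add ((hasDerivAt_pow 4 t).div_const 24)).sub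
        ((hasDerivAt_pow 6 t).div_const 720))
      refine h.congr_deriv ?_; push_cast; ring)
    (by simp)
    (fun t ht => by have := sin_ub5 t ht; linarith) hx
  linarith

lemma sin_lb7 (x : ℝ) (hx : 0 ≤ x) : x - x^3/6 + x^5/120 - x^7/5040 ≤ Real.sin x := by
  have h := aux_nonneg (F := fun t => Real.sin t - (t - t^3/6 + t^5/120 - t^7/5040))
    (F' := fun t => Real.cos t - (1 - t^2/2 + t^4/24 - t^6/720))
    (fun t => by
      have h := (Real.hasDerivAt_sin t).sub (((((hasDerivAt_id t).sub
        ((hasDerivAt_pow 3 t).div_const 6)).add ((hasDerivAt_pow 5 t).div_const 120)).sub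
        ((hasDerivAt_pow 7 t).div_const 5040)))
      refine h.congr_deriv ?_; push_cast; ring)
    (by simp)
    (fun t ht => by have := cos_lb6 t ht; linarith) hx
  linarith

lemma cos_ub8 (x : ℝ) (hx : 0 ≤ x) : Real.cos x ≤ 1 - x^2/2 + x^4/24 - x^6/720 + x^8/40320 := by
  have h := aux_nonneg (F := fun t => (1 - t^2/2 + t^4/24 - t^6/720 + t^8/40320) - Real.cos t)
    (F' := fun t => Real.sin t - (t - t^3/6 + t^5/120 - t^7/5040))
    (fun t => by
      have h := (((((hasDerivAt_const t (1:ℝ)).sub ((hasDerivAt_pow 2 t).div_const 2)).add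
        ((hasDerivAt_pow 4 t).div_const 24)).sub ((hasDerivAt_pow 6 t).div_const 720)).add
        ((hasDerivAt_pow 8 t).div_const 40320)).sub (Real.hasDerivAt_cos t)
      refine h.congr_deriv ?_; push_cast; ring)
    (by simp)
    (fun t ht => by have := sin_lb7 t ht; linarith) hx
  linarith

lemma sin_ub9 (x : ℝ) (hx : 0 ≤ x) :
    Real.sin x ≤ x - x^3/6 + x^5/120 - x^7/5040 + x^9/362880 := by
  have h := aux_nonneg (F := fun t => (t - t^3/6 + t^5/120 - t^7/5040 + t^9/362880) - Real.sin t)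
    (F' := fun t => (1 - t^2/2 + t^4/24 - t^6/720 + t^8/40320) - Real.cos t)
    (fun t => by
      have h := ((((((hasDerivAt_id t).sub ((hasDerivAt_pow 3 t).div_const 6)).add
        ((hasDerivAt_pow 5 t).div_const 120)).sub ((hasDerivAt_pow 7 t).div_const 5040)).add
        ((hasDerivAt_pow 9 t).div_const 362880))).sub (Real.hasDerivAt_sin t)
      refine h.congr_deriv ?_; push_cast; ring)
    (by simp)
    (fun t ht => by have := cos_ub8 t ht; linarith) hx
  linarith

lemma cos_lb10 (x : ℝ) (hx : 0 ≤ x) :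
    1 - x^2/2 + x^4/24 - x^6/720 + x^8/40320 - x^10/3628800 ≤ Real.cos x := by
  have h := aux_nonneg
    (F := fun t => Real.cos t - (1 - t^2/2 + t^4/24 - t^6/720 + t^8/40320 - t^10/3628800))
    (F' := fun t => (t - t^3/6 + t^5/120 - t^7/5040 + t^9/362880) - Real.sin t)
    (fun t => by
      have h := (Real.hasDerivAt_cos t).sub ((((((hasDerivAt_const t (1:ℝ)).sub
        ((hasDerivAt_pow 2 t).div_const 2)).add ((hasDerivAt_pow 4 t).div_const 24)).sub
        ((hasDerivAt_pow 6 t).div_const 720)).add ((hasDerivAt_pow 8 t).div_const 40320)).sub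
        ((hasDerivAt_pow 10 t).div_const 3628800))
      refine h.congr_deriv ?_; push_cast; ring)
    (by simp)
    (fun t ht => by have := sin_ub9 t ht; linarith) hx
  linarith
set_option maxHeartbeats 1600000
lemma Spos (y : ℝ) (h0 : 0 ≤ y) (h1 : y ≤ 9/4) :
    0 < (2231/22500 : ℝ) - (7789/105000 : ℝ) * y + (2134501/113400000 : ℝ) * y^2 - (37963/15120000 : ℝ) * y^3 + (6652349/31752000000 : ℝ) * y^4 - (106823/9072000000 : ℝ) * y^5 + (2308459/5080320000000 : ℝ) * y^6 - (3751/317520000000 : ℝ) * y^7 + (121/635040000000 : ℝ) * y^8 - (121/80015040000000 : ℝ) * y^9 := by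
  rcases le_or_gt y (1/4 : ℝ) with hr0|hl0
  · linarith [pow_nonneg h0 2, pow_le_pow_left₀ h0 hr0 2, pow_nonneg h0 3, pow_le_pow_left₀ h0 hr0 3, pow_nonneg h0 4, pow_le_pow_left₀ h0 hr0 4, pow_nonneg h0 5, pow_le_pow_left₀ h0 hr0 5, pow_nonneg h0 6, pow_le_pow_left₀ h0 hr0 6, pow_nonneg h0 7, pow_le_pow_left₀ h0 hr0 7, pow_nonneg h0 8, pow_le_pow_left₀ h0 hr0 8, pow_nonneg h0 9, pow_le_pow_left₀ h0 hr0 9]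
  rcases le_or_gt y (1/2 : ℝ) with hr1|hl1
  · linarith [pow_le_pow_left₀ (by norm_num : (0:ℝ) ≤ (1/4 : ℝ)) hl0.le 2, pow_le_pow_left₀ h0 hr1 2, pow_le_pow_left₀ (by norm_num : (0:ℝ) ≤ (1/4 : ℝ)) hl0.le 3, pow_le_pow_left₀ h0 hr1 3, pow_le_pow_left₀ (by norm_num : (0:ℝ) ≤ (1/4 : ℝ)) hl0.le 4, pow_le_pow_left₀ h0 hr1 4, pow_le_pow_left₀ (by norm_num : (0:ℝ) ≤ (1/4 : ℝ)) hl0.le 5, pow_le_pow_left₀ h0 hr1 5, pow_le_pow_left₀ (by norm_num : (0:ℝ) ≤ (1/4 : ℝ)) hl0.le 6, pow_le_pow_left₀ h0 hr1 6, pow_le_pow_left₀ (by norm_num : (0:ℝ) ≤ (1/4 : ℝ)) hl0.le 7, pow_le_pow_left₀ h0 hr1 7, pow_le_pow_left₀ (by norm_num : (0:ℝ) ≤ (1/4 : ℝ)) hl0.le 8, pow_le_pow_left₀ h0 hr1 8, pow_le_pow_left₀ (by norm_num : (0:ℝ) ≤ (1/4 : ℝ)) hl0.le 9, pow_le_pow_left₀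 h0 hr1 9]
  rcases le_or_gt y (3/4 : ℝ) with hr2|hl2
  · linarith [pow_le_pow_left₀ (by norm_num : (0:ℝ) ≤ (1/2 : ℝ)) hl1.le 2, pow_le_pow_left₀ h0 hr2 2, pow_le_pow_left₀ (by norm_num : (0:ℝ) ≤ (1/2 : ℝ)) hl1.le 3, pow_le_pow_left₀ h0 hr2 3, pow_le_pow_left₀ (by norm_num : (0:ℝ) ≤ (1/2 : ℝ)) hl1.le 4, pow_le_pow_left₀ h0 hr2 4, pow_le_pow_left₀ (by norm_num : (0:ℝ) ≤ (1/2 : ℝ)) hl1.le 5, pow_le_pow_left₀ h0 hr2 5, pow_le_pow_left₀ (by norm_num : (0:ℝ) ≤ (1/2 : ℝ)) hl1.le 6, pow_le_pow_left₀ h0 hr2 6, pow_le_pow_left₀ (by norm_num : (0:ℝ) ≤ (1/2 : ℝ)) hl1.le 7, pow_le_pow_left₀ h0 hr2 7, pow_le_pow_left₀ (by norm_num : (0:ℝ) ≤ (1/2 : ℝ)) hl1.le 8, pow_le_pow_left₀ h0 hr2 8, pow_le_pow_left₀ (by norm_num : (0:ℝ) ≤ (1/2 : ℝ)) hl1.le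 9, pow_le_pow_left₀ h0 hr2 9]
  rcases le_or_gt y (1 : ℝ) with hr3|hl3
  · linarith [pow_le_pow_left₀ (by norm_num : (0:ℝ) ≤ (3/4 : ℝ)) hl2.le 2, pow_le_pow_left₀ h0 hr3 2, pow_le_pow_left₀ (by norm_num : (0:ℝ) ≤ (3/4 : ℝ)) hl2.le 3, pow_le_pow_left₀ h0 hr3 3, pow_le_pow_left₀ (by norm_num : (0:ℝ) ≤ (3/4 : ℝ)) hl2.le 4, pow_le_pow_left₀ h0 hr3 4, pow_le_pow_left₀ (by norm_num : (0:ℝ) ≤ (3/4 : ℝ)) hl2.le 5, pow_le_pow_left₀ h0 hr3 5, pow_le_pow_left₀ (by norm_num : (0:ℝ) ≤ (3/4 : ℝ)) hl2.le 6, pow_le_pow_left₀ h0 hr3 6, pow_le_pow_left₀ (by norm_num : (0:ℝ) ≤ (3/4 : ℝ)) hl2.le 7, pow_le_pow_left₀ h0 hr3 7, pow_le_pow_left₀ (by norm_num : (0:ℝ) ≤ (3/4 : ℝ)) hl2.le 8, pow_le_pow_left₀ h0 hr3 8, pow_le_pow_left₀ (by norm_num : (0:ℝ) ≤ (3/4 :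 ℝ)) hl2.le 9, pow_le_pow_left₀ h0 hr3 9]
  rcases le_or_gt y (5/4 : ℝ) with hr4|hl4
  · linarith [pow_le_pow_left₀ (by norm_num : (0:ℝ) ≤ (1 : ℝ)) hl3.le 2, pow_le_pow_left₀ h0 hr4 2, pow_le_pow_left₀ (by norm_num : (0:ℝ) ≤ (1 : ℝ)) hl3.le 3, pow_le_pow_left₀ h0 hr4 3, pow_le_pow_left₀ (by norm_num : (0:ℝ) ≤ (1 : ℝ)) hl3.le 4, pow_le_pow_left₀ h0 hr4 4, pow_le_pow_left₀ (by norm_num : (0:ℝ) ≤ (1 : ℝ)) hl3.le 5, pow_le_pow_left₀ h0 hr4 5, pow_le_pow_left₀ (by norm_num : (0:ℝ) ≤ (1 : ℝ)) hl3.le 6, pow_le_pow_left₀ h0 hr4 6, pow_le_pow_left₀ (by norm_num : (0:ℝ) ≤ (1 : ℝ)) hl3.le 7, pow_le_pow_left₀ h0 hr4 7, pow_le_pow_left₀ (by norm_num : (0:ℝ) ≤ (1 : ℝ)) hl3.le 8, pow_le_pow_left₀ h0 hr4 8, pow_le_pow_left₀ (by norm_num : (0:ℝ) ≤ (1 : ℝ))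 hl3.le 9, pow_le_pow_left₀ h0 hr4 9]
  rcases le_or_gt y (3/2 : ℝ) with hr5|hl5
  · linarith [pow_le_pow_left₀ (by norm_num : (0:ℝ) ≤ (5/4 : ℝ)) hl4.le 2, pow_le_pow_left₀ h0 hr5 2, pow_le_pow_left₀ (by norm_num : (0:ℝ) ≤ (5/4 : ℝ)) hl4.le 3, pow_le_pow_left₀ h0 hr5 3, pow_le_pow_left₀ (by norm_num : (0:ℝ) ≤ (5/4 : ℝ)) hl4.le 4, pow_le_pow_left₀ h0 hr5 4, pow_le_pow_left₀ (by norm_num : (0:ℝ) ≤ (5/4 : ℝ)) hl4.le 5, pow_le_pow_left₀ h0 hr5 5, pow_le_pow_left₀ (by norm_num : (0:ℝ) ≤ (5/4 : ℝ)) hl4.le 6, pow_le_pow_left₀ h0 hr5 6, pow_le_pow_left₀ (by norm_num : (0:ℝ) ≤ (5/4 : ℝ)) hl4.le 7, pow_le_pow_left₀ h0 hr5 7, pow_le_pow_left₀ (by norm_num : (0:ℝ) ≤ (5/4 : ℝ)) hl4.le 8, pow_le_pow_left₀ h0 hr5 8, pow_le_pow_left₀ (by norm_num : (0:ℝ) ≤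 (5/4 : ℝ)) hl4.le 9, pow_le_pow_left₀ h0 hr5 9]
  rcases le_or_gt y (13/8 : ℝ) with hr6|hl6
  · linarith [pow_le_pow_left₀ (by norm_num : (0:ℝ) ≤ (3/2 : ℝ)) hl5.le 2, pow_le_pow_left₀ h0 hr6 2, pow_le_pow_left₀ (by norm_num : (0:ℝ) ≤ (3/2 : ℝ)) hl5.le 3, pow_le_pow_left₀ h0 hr6 3, pow_le_pow_left₀ (by norm_num : (0:ℝ) ≤ (3/2 : ℝ)) hl5.le 4, pow_le_pow_left₀ h0 hr6 4, pow_le_pow_left₀ (by norm_num : (0:ℝ) ≤ (3/2 : ℝ)) hl5.le 5, pow_le_pow_left₀ h0 hr6 5, pow_le_pow_left₀ (by norm_num : (0:ℝ) ≤ (3/2 : ℝ)) hl5.le 6, pow_le_pow_left₀ h0 hr6 6, pow_le_pow_left₀ (by norm_num : (0:ℝ) ≤ (3/2 : ℝ)) hl5.le 7, pow_le_pow_left₀ h0 hr6 7, pow_le_pow_left₀ (by norm_num : (0:ℝ) ≤ (3/2 : ℝ)) hl5.le 8, pow_le_pow_left₀ h0 hr6 8, pow_le_pow_left₀ (by norm_num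 : (0:ℝ) ≤ (3/2 : ℝ)) hl5.le 9, pow_le_pow_left₀ h0 hr6 9]
  rcases le_or_gt y (7/4 : ℝ) with hr7|hl7
  · linarith [pow_le_pow_left₀ (by norm_num : (0:ℝ) ≤ (13/8 : ℝ)) hl6.le 2, pow_le_pow_left₀ h0 hr7 2, pow_le_pow_left₀ (by norm_num : (0:ℝ) ≤ (13/8 : ℝ)) hl6.le 3, pow_le_pow_left₀ h0 hr7 3, pow_le_pow_left₀ (by norm_num : (0:ℝ) ≤ (13/8 : ℝ)) hl6.le 4, pow_le_pow_left₀ h0 hr7 4, pow_le_pow_left₀ (by norm_num : (0:ℝ) ≤ (13/8 : ℝ)) hl6.le 5, pow_le_pow_left₀ h0 hr7 5, pow_le_pow_left₀ (by norm_num : (0:ℝ) ≤ (13/8 : ℝ)) hl6.le 6, pow_le_pow_left₀ h0 hr7 6, pow_le_pow_left₀ (by norm_num : (0:ℝ) ≤ (13/8 : ℝ)) hl6.le 7, pow_le_pow_left₀ h0 hr7 7, pow_le_pow_left₀ (by norm_num : (0:ℝ) ≤ (13/8 : ℝ)) hl6.le 8, pow_le_pow_left₀ h0 hr7 8, pow_le_pow_left₀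 (by norm_num : (0:ℝ) ≤ (13/8 : ℝ)) hl6.le 9, pow_le_pow_left₀ h0 hr7 9]
  rcases le_or_gt y (15/8 : ℝ) with hr8|hl8
  · linarith [pow_le_pow_left₀ (by norm_num : (0:ℝ) ≤ (7/4 : ℝ)) hl7.le 2, pow_le_pow_left₀ h0 hr8 2, pow_le_pow_left₀ (by norm_num : (0:ℝ) ≤ (7/4 : ℝ)) hl7.le 3, pow_le_pow_left₀ h0 hr8 3, pow_le_pow_left₀ (by norm_num : (0:ℝ) ≤ (7/4 : ℝ)) hl7.le 4, pow_le_pow_left₀ h0 hr8 4, pow_le_pow_left₀ (by norm_num : (0:ℝ) ≤ (7/4 : ℝ)) hl7.le 5, pow_le_pow_left₀ h0 hr8 5, pow_le_pow_left₀ (by norm_num : (0:ℝ) ≤ (7/4 : ℝ)) hl7.le 6, pow_le_pow_left₀ h0 hr8 6, pow_le_pow_left₀ (by norm_num : (0:ℝ) ≤ (7/4 : ℝ)) hl7.le 7, pow_le_pow_left₀ h0 hr8 7, pow_le_pow_left₀ (by norm_num : (0:ℝ) ≤ (7/4 : ℝ)) hl7.le 8, pow_le_pow_left₀ h0 hr8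 8, pow_le_pow_left₀ (by norm_num : (0:ℝ) ≤ (7/4 : ℝ)) hl7.le 9, pow_le_pow_left₀ h0 hr8 9]
  rcases le_or_gt y (31/16 : ℝ) with hr9|hl9
  · linarith [pow_le_pow_left₀ (by norm_num : (0:ℝ) ≤ (15/8 : ℝ)) hl8.le 2, pow_le_pow_left₀ h0 hr9 2, pow_le_pow_left₀ (by norm_num : (0:ℝ) ≤ (15/8 : ℝ)) hl8.le 3, pow_le_pow_left₀ h0 hr9 3, pow_le_pow_left₀ (by norm_num : (0:ℝ) ≤ (15/8 : ℝ)) hl8.le 4, pow_le_pow_left₀ h0 hr9 4, pow_le_pow_left₀ (by norm_num : (0:ℝ) ≤ (15/8 : ℝ)) hl8.le 5, pow_le_pow_left₀ h0 hr9 5, pow_le_pow_left₀ (by norm_num : (0:ℝ) ≤ (15/8 : ℝ)) hl8.le 6, pow_le_pow_left₀ h0 hr9 6, pow_le_pow_left₀ (by norm_num : (0:ℝ) ≤ (15/8 : ℝ)) hl8.le 7, pow_le_pow_left₀ h0 hr9 7, pow_le_pow_left₀ (by norm_num : (0:ℝ) ≤ (15/8 : ℝ)) hl8.le 8, pow_le_pow_left₀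 h0 hr9 8, pow_le_pow_left₀ (by norm_num : (0:ℝ) ≤ (15/8 : ℝ)) hl8.le 9, pow_le_pow_left₀ h0 hr9 9]
  rcases le_or_gt y (2 : ℝ) with hr10|hl10
  · linarith [pow_le_pow_left₀ (by norm_num : (0:ℝ) ≤ (31/16 : ℝ)) hl9.le 2, pow_le_pow_left₀ h0 hr10 2, pow_le_pow_left₀ (by norm_num : (0:ℝ) ≤ (31/16 : ℝ)) hl9.le 3, pow_le_pow_left₀ h0 hr10 3, pow_le_pow_left₀ (by norm_num : (0:ℝ) ≤ (31/16 : ℝ)) hl9.le 4, pow_le_pow_left₀ h0 hr10 4, pow_le_pow_left₀ (by norm_num : (0:ℝ) ≤ (31/16 : ℝ)) hl9.le 5, pow_le_pow_left₀ h0 hr10 5, pow_le_pow_left₀ (by norm_num : (0:ℝ) ≤ (31/16 : ℝ)) hl9.le 6, pow_le_pow_left₀ h0 hr10 6, pow_le_pow_left₀ (by norm_num : (0:ℝ) ≤ (31/16 : ℝ)) hl9.le 7, pow_le_pow_left₀ h0 hr10 7, pow_le_pow_left₀ (by norm_num : (0:ℝ) ≤ (31/16 : ℝ)) hl9.le 8,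 pow_le_pow_left₀ h0 hr10 8, pow_le_pow_left₀ (by norm_num : (0:ℝ) ≤ (31/16 : ℝ)) hl9.le 9, pow_le_pow_left₀ h0 hr10 9]
  rcases le_or_gt y (33/16 : ℝ) with hr11|hl11
  · linarith [pow_le_pow_left₀ (by norm_num : (0:ℝ) ≤ (2 : ℝ)) hl10.le 2, pow_le_pow_left₀ h0 hr11 2, pow_le_pow_left₀ (by norm_num : (0:ℝ) ≤ (2 : ℝ)) hl10.le 3, pow_le_pow_left₀ h0 hr11 3, pow_le_pow_left₀ (by norm_num : (0:ℝ) ≤ (2 : ℝ)) hl10.le 4, pow_le_pow_left₀ h0 hr11 4, pow_le_pow_left₀ (by norm_num : (0:ℝ) ≤ (2 : ℝ)) hl10.le 5, pow_le_pow_left₀ h0 hr11 5, pow_le_pow_left₀ (by norm_num : (0:ℝ) ≤ (2 : ℝ)) hl10.le 6, pow_le_pow_left₀ h0 hr11 6, pow_le_pow_left₀ (by norm_num : (0:ℝ) ≤ (2 : ℝ)) hl10.le 7, pow_le_pow_left₀ h0 hr11 7, pow_le_pow_left₀ (by norm_num : (0:ℝ) ≤ (2 : ℝ)) hl10.le 8,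 pow_le_pow_left₀ h0 hr11 8, pow_le_pow_left₀ (by norm_num : (0:ℝ) ≤ (2 : ℝ)) hl10.le 9, pow_le_pow_left₀ h0 hr11 9]
  rcases le_or_gt y (135/64 : ℝ) with hr12|hl12
  · linarith [pow_le_pow_left₀ (by norm_num : (0:ℝ) ≤ (33/16 : ℝ)) hl11.le 2, pow_le_pow_left₀ h0 hr12 2, pow_le_pow_left₀ (by norm_num : (0:ℝ) ≤ (33/16 : ℝ)) hl11.le 3, pow_le_pow_left₀ h0 hr12 3, pow_le_pow_left₀ (by norm_num : (0:ℝ) ≤ (33/16 : ℝ)) hl11.le 4, pow_le_pow_left₀ h0 hr12 4, pow_le_pow_left₀ (by norm_num : (0:ℝ) ≤ (33/16 : ℝ)) hl11.le 5, pow_le_pow_left₀ h0 hr12 5, pow_le_pow_left₀ (by norm_num : (0:ℝ) ≤ (33/16 : ℝ)) hl11.le 6, pow_le_pow_left₀ h0 hr12 6, pow_le_pow_left₀ (by norm_num : (0:ℝ) ≤ (33/16 : ℝ)) hl11.le 7, pow_le_pow_left₀ h0 hr12 7, pow_le_pow_left₀ (by norm_num : (0:ℝ) ≤ (33/16 : ℝ))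 hl11.le 8, pow_le_pow_left₀ h0 hr12 8, pow_le_pow_left₀ (by norm_num : (0:ℝ) ≤ (33/16 : ℝ)) hl11.le 9, pow_le_pow_left₀ h0 hr12 9]
  rcases le_or_gt y (549/256 : ℝ) with hr13|hl13
  · linarith [pow_le_pow_left₀ (by norm_num : (0:ℝ) ≤ (135/64 : ℝ)) hl12.le 2, pow_le_pow_left₀ h0 hr13 2, pow_le_pow_left₀ (by norm_num : (0:ℝ) ≤ (135/64 : ℝ)) hl12.le 3, pow_le_pow_left₀ h0 hr13 3, pow_le_pow_left₀ (by norm_num : (0:ℝ) ≤ (135/64 : ℝ)) hl12.le 4, pow_le_pow_left₀ h0 hr13 4, pow_le_pow_left₀ (by norm_num : (0:ℝ) ≤ (135/64 : ℝ)) hl12.le 5, pow_le_pow_left₀ h0 hr13 5, pow_le_pow_left₀ (by norm_num : (0:ℝ) ≤ (135/64 : ℝ)) hl12.le 6, pow_le_pow_left₀ h0 hr13 6, pow_le_pow_left₀ (by norm_num : (0:ℝ) ≤ (135/64 : ℝ)) hl12.le 7, pow_le_pow_left₀ h0 hr13 7, pow_le_pow_left₀ (by norm_num : (0:ℝ) ≤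 (135/64 : ℝ)) hl12.le 8, pow_le_pow_left₀ h0 hr13 8, pow_le_pow_left₀ (by norm_num : (0:ℝ) ≤ (135/64 : ℝ)) hl12.le 9, pow_le_pow_left₀ h0 hr13 9]
  rcases le_or_gt y (2223/1024 : ℝ) with hr14|hl14
  · linarith [pow_le_pow_left₀ (by norm_num : (0:ℝ) ≤ (549/256 : ℝ)) hl13.le 2, pow_le_pow_left₀ h0 hr14 2, pow_le_pow_left₀ (by norm_num : (0:ℝ) ≤ (549/256 : ℝ)) hl13.le 3, pow_le_pow_left₀ h0 hr14 3, pow_le_pow_left₀ (by norm_num : (0:ℝ) ≤ (549/256 : ℝ)) hl13.le 4, pow_le_pow_left₀ h0 hr14 4, pow_le_pow_left₀ (by norm_num : (0:ℝ) ≤ (549/256 : ℝ)) hl13.le 5, pow_le_pow_left₀ h0 hr14 5, pow_le_pow_left₀ (by norm_num : (0:ℝ) ≤ (549/256 : ℝ)) hl13.le 6, pow_le_pow_left₀ h0 hr14 6, pow_le_pow_left₀ (by norm_num : (0:ℝ) ≤ (549/256 : ℝ)) hl13.le 7, pow_le_pow_left₀ h0 hr14 7, pow_le_pow_left₀ (by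 norm_num : (0:ℝ) ≤ (549/256 : ℝ)) hl13.le 8, pow_le_pow_left₀ h0 hr14 8, pow_le_pow_left₀ (by norm_num : (0:ℝ) ≤ (549/256 : ℝ)) hl13.le 9, pow_le_pow_left₀ h0 hr14 9]
  rcases le_or_gt y (8973/4096 : ℝ) with hr15|hl15
  · linarith [pow_le_pow_left₀ (by norm_num : (0:ℝ) ≤ (2223/1024 : ℝ)) hl14.le 2, pow_le_pow_left₀ h0 hr15 2, pow_le_pow_left₀ (by norm_num : (0:ℝ) ≤ (2223/1024 : ℝ)) hl14.le 3, pow_le_pow_left₀ h0 hr15 3, pow_le_pow_left₀ (by norm_num : (0:ℝ) ≤ (2223/1024 : ℝ)) hl14.le 4, pow_le_pow_left₀ h0 hr15 4, pow_le_pow_left₀ (by norm_num : (0:ℝ) ≤ (2223/1024 : ℝ)) hl14.le 5, pow_le_pow_left₀ h0 hr15 5, pow_le_pow_left₀ (by norm_num : (0:ℝ) ≤ (2223/1024 : ℝ)) hl14.le 6, pow_le_pow_left₀ h0 hr15 6, pow_le_pow_left₀ (by norm_num : (0:ℝ) ≤ (2223/1024 : ℝ)) hl14.le 7, pow_le_pow_left₀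 h0 hr15 7, pow_le_pow_left₀ (by norm_num : (0:ℝ) ≤ (2223/1024 : ℝ)) hl14.le 8, pow_le_pow_left₀ h0 hr15 8, pow_le_pow_left₀ (by norm_num : (0:ℝ) ≤ (2223/1024 : ℝ)) hl14.le 9, pow_le_pow_left₀ h0 hr15 9]
  rcases le_or_gt y (18189/8192 : ℝ) with hr16|hl16
  · linarith [pow_le_pow_left₀ (by norm_num : (0:ℝ) ≤ (8973/4096 : ℝ)) hl15.le 2, pow_le_pow_left₀ h0 hr16 2, pow_le_pow_left₀ (by norm_num : (0:ℝ) ≤ (8973/4096 : ℝ)) hl15.le 3, pow_le_pow_left₀ h0 hr16 3, pow_le_pow_left₀ (by norm_num : (0:ℝ) ≤ (8973/4096 : ℝ)) hl15.le 4, pow_le_pow_left₀ h0 hr16 4, pow_le_pow_left₀ (by norm_num : (0:ℝ) ≤ (8973/4096 : ℝ)) hl15.le 5, pow_le_pow_left₀ h0 hr16 5, pow_le_pow_left₀ (by norm_num : (0:ℝ) ≤ (8973/4096 : ℝ)) hl15.le 6, pow_le_pow_left₀ h0 hr16 6, pow_le_pow_left₀ (by norm_num : (0:ℝ) ≤ (8973/4096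 : ℝ)) hl15.le 7, pow_le_pow_left₀ h0 hr16 7, pow_le_pow_left₀ (by norm_num : (0:ℝ) ≤ (8973/4096 : ℝ)) hl15.le 8, pow_le_pow_left₀ h0 hr16 8, pow_le_pow_left₀ (by norm_num : (0:ℝ) ≤ (8973/4096 : ℝ)) hl15.le 9, pow_le_pow_left₀ h0 hr16 9]
  rcases le_or_gt y (36621/16384 : ℝ) with hr17|hl17
  · linarith [pow_le_pow_left₀ (by norm_num : (0:ℝ) ≤ (18189/8192 : ℝ)) hl16.le 2, pow_le_pow_left₀ h0 hr17 2, pow_le_pow_left₀ (by norm_num : (0:ℝ) ≤ (18189/8192 : ℝ)) hl16.le 3, pow_le_pow_left₀ h0 hr17 3, pow_le_pow_left₀ (by norm_num : (0:ℝ) ≤ (18189/8192 : ℝ)) hl16.le 4, pow_le_pow_left₀ h0 hr17 4, pow_le_pow_left₀ (by norm_num : (0:ℝ) ≤ (18189/8192 : ℝ)) hl16.le 5, pow_le_pow_left₀ h0 hr17 5, pow_le_pow_left₀ (by norm_num : (0:ℝ) ≤ (18189/8192 : ℝ)) hl16.le 6, pow_le_pow_left₀ h0 hr17 6, pow_le_pow_left₀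 (by norm_num : (0:ℝ) ≤ (18189/8192 : ℝ)) hl16.le 7, pow_le_pow_left₀ h0 hr17 7, pow_le_pow_left₀ (by norm_num : (0:ℝ) ≤ (18189/8192 : ℝ)) hl16.le 8, pow_le_pow_left₀ h0 hr17 8, pow_le_pow_left₀ (by norm_num : (0:ℝ) ≤ (18189/8192 : ℝ)) hl16.le 9, pow_le_pow_left₀ h0 hr17 9]
  linarith [pow_le_pow_left₀ (by norm_num : (0:ℝ) ≤ (36621/16384 : ℝ)) hl17.le 2, pow_le_pow_left₀ h0 h1 2, pow_le_pow_left₀ (by norm_num : (0:ℝ) ≤ (36621/16384 : ℝ)) hl17.le 3, pow_le_pow_left₀ h0 h1 3, pow_le_pow_left₀ (by norm_num : (0:ℝ) ≤ (36621/16384 : ℝ)) hl17.le 4, pow_le_pow_left₀ h0 h1 4, pow_le_pow_left₀ (by norm_num : (0:ℝ) ≤ (36621/16384 : ℝ)) hl17.le 5, pow_le_pow_left₀ h0 h1 5, pow_le_pow_left₀ (by norm_num : (0:ℝ) ≤ (36621/16384 : ℝ)) hl17.le 6, pow_le_pow_left₀ h0 h1 6, pow_le_pow_left₀ (by norm_num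 : (0:ℝ) ≤ (36621/16384 : ℝ)) hl17.le 7, pow_le_pow_left₀ h0 h1 7, pow_le_pow_left₀ (by norm_num : (0:ℝ) ≤ (36621/16384 : ℝ)) hl17.le 8, pow_le_pow_left₀ h0 h1 8, pow_le_pow_left₀ (by norm_num : (0:ℝ) ≤ (36621/16384 : ℝ)) hl17.le 9, pow_le_pow_left₀ h0 h1 9]

lemma Wneg (t : ℝ) (h0 : (3/2 : ℝ) ≤ t) (h1 : t ≤ (15707965/10000000 : ℝ)) :
    (5582/9375 : ℝ) * t^5 - (38966/65625 : ℝ) * t^7 + (2675761/14175000 : ℝ) * t^9 - (489503/16200000 : ℝ) * t^11 + (25163077/8505000000 : ℝ) * t^13 - (140656969/714420000000 : ℝ) * t^15 + (1080809831/114307200000000 : ℝ) * t^17 - (1287347/3810240000000 : ℝ) * t^19 + (18654703/2057529600000000 : ℝ) * t^21 - (96571/533433600000000 : ℝ) * t^23 + (66443/25604812800000000 : ℝ) * t^25 - (269/10973491200000000 : ℝ) * t^27 + (269/2212255825920000000 : ℝ) * t^29 < 0 := by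
  have ht0 : (0:ℝ) ≤ t := by linarith
  rcases le_or_gt t (385/256 : ℝ) with hr0|hl0
  · linarith [pow_le_pow_left₀ (by norm_num : (0:ℝ) ≤ (3/2 : ℝ)) h0 5, pow_le_pow_left₀ ht0 hr0 5, pow_le_pow_left₀ (by norm_num : (0:ℝ) ≤ (3/2 : ℝ)) h0 7, pow_le_pow_left₀ ht0 hr0 7, pow_le_pow_left₀ (by norm_num : (0:ℝ) ≤ (3/2 : ℝ)) h0 9, pow_le_pow_left₀ ht0 hr0 9, pow_le_pow_left₀ (by norm_num : (0:ℝ) ≤ (3/2 : ℝ)) h0 11, pow_le_pow_left₀ ht0 hr0 11, pow_le_pow_left₀ (by norm_num : (0:ℝ) ≤ (3/2 : ℝ)) h0 13, pow_le_pow_left₀ ht0 hr0 13, pow_le_pow_left₀ (by norm_num : (0:ℝ) ≤ (3/2 : ℝ)) h0 15, pow_le_pow_left₀ ht0 hr0 15, pow_le_pow_left₀ (by norm_num : (0:ℝ) ≤ (3/2 : ℝ)) h0 17, pow_le_pow_left₀ ht0 hr0 17, pow_le_pow_left₀ (by norm_num : (0:ℝ) ≤ (3/2 : ℝ)) h0 19,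 pow_le_pow_left₀ ht0 hr0 19, pow_le_pow_left₀ (by norm_num : (0:ℝ) ≤ (3/2 : ℝ)) h0 21, pow_le_pow_left₀ ht0 hr0 21, pow_le_pow_left₀ (by norm_num : (0:ℝ) ≤ (3/2 : ℝ)) h0 23, pow_le_pow_left₀ ht0 hr0 23, pow_le_pow_left₀ (by norm_num : (0:ℝ) ≤ (3/2 : ℝ)) h0 25, pow_le_pow_left₀ ht0 hr0 25, pow_le_pow_left₀ (by norm_num : (0:ℝ) ≤ (3/2 : ℝ)) h0 27, pow_le_pow_left₀ ht0 hr0 27, pow_le_pow_left₀ (by norm_num : (0:ℝ) ≤ (3/2 : ℝ)) h0 29, pow_le_pow_left₀ ht0 hr0 29]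
  rcases le_or_gt t (193/128 : ℝ) with hr1|hl1
  · linarith [pow_le_pow_left₀ (by norm_num : (0:ℝ) ≤ (385/256 : ℝ)) hl0.le 5, pow_le_pow_left₀ ht0 hr1 5, pow_le_pow_left₀ (by norm_num : (0:ℝ) ≤ (385/256 : ℝ)) hl0.le 7, pow_le_pow_left₀ ht0 hr1 7, pow_le_pow_left₀ (by norm_num : (0:ℝ) ≤ (385/256 : ℝ)) hl0.le 9, pow_le_pow_left₀ ht0 hr1 9, pow_le_pow_left₀ (by norm_num : (0:ℝ) ≤ (385/256 : ℝ)) hl0.le 11, pow_le_pow_left₀ ht0 hr1 11, pow_le_pow_left₀ (by norm_num : (0:ℝ) ≤ (385/256 : ℝ)) hl0.le 13, pow_le_pow_left₀ ht0 hr1 13, pow_le_pow_left₀ (by norm_num : (0:ℝ) ≤ (385/256 : ℝ)) hl0.le 15, pow_le_pow_left₀ ht0 hr1 15, pow_le_pow_left₀ (by norm_num : (0:ℝ) ≤ (385/256 : ℝ)) hl0.le 17, pow_le_pow_left₀ ht0 hr1 17, pow_le_pow_left₀ (by norm_num : (0:ℝ) ≤ (385/256 : ℝ)) hl0.le 19,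 pow_le_pow_left₀ ht0 hr1 19, pow_le_pow_left₀ (by norm_num : (0:ℝ) ≤ (385/256 : ℝ)) hl0.le 21, pow_le_pow_left₀ ht0 hr1 21, pow_le_pow_left₀ (by norm_num : (0:ℝ) ≤ (385/256 : ℝ)) hl0.le 23, pow_le_pow_left₀ ht0 hr1 23, pow_le_pow_left₀ (by norm_num : (0:ℝ) ≤ (385/256 : ℝ)) hl0.le 25, pow_le_pow_left₀ ht0 hr1 25, pow_le_pow_left₀ (by norm_num : (0:ℝ) ≤ (385/256 : ℝ)) hl0.le 27, pow_le_pow_left₀ ht0 hr1 27, pow_le_pow_left₀ (by norm_num : (0:ℝ) ≤ (385/256 : ℝ)) hl0.le 29, pow_le_pow_left₀ ht0 hr1 29]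
  rcases le_or_gt t (387/256 : ℝ) with hr2|hl2
  · linarith [pow_le_pow_left₀ (by norm_num : (0:ℝ) ≤ (193/128 : ℝ)) hl1.le 5, pow_le_pow_left₀ ht0 hr2 5, pow_le_pow_left₀ (by norm_num : (0:ℝ) ≤ (193/128 : ℝ)) hl1.le 7, pow_le_pow_left₀ ht0 hr2 7, pow_le_pow_left₀ (by norm_num : (0:ℝ) ≤ (193/128 : ℝ)) hl1.le 9, pow_le_pow_left₀ ht0 hr2 9, pow_le_pow_left₀ (by norm_num : (0:ℝ) ≤ (193/128 : ℝ)) hl1.le 11, pow_le_pow_left₀ ht0 hr2 11, pow_le_pow_left₀ (by norm_num : (0:ℝ) ≤ (193/128 : ℝ)) hl1.le 13, pow_le_pow_left₀ ht0 hr2 13, pow_le_pow_left₀ (by norm_num : (0:ℝ) ≤ (193/128 : ℝ)) hl1.le 15, pow_le_pow_left₀ ht0 hr2 15, pow_le_pow_left₀ (by norm_num : (0:ℝ) ≤ (193/128 : ℝ)) hl1.le 17, pow_le_pow_left₀ ht0 hr2 17, pow_le_pow_left₀ (by norm_num : (0:ℝ) ≤ (193/128 : ℝ)) hl1.le 19,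 pow_le_pow_left₀ ht0 hr2 19, pow_le_pow_left₀ (by norm_num : (0:ℝ) ≤ (193/128 : ℝ)) hl1.le 21, pow_le_pow_left₀ ht0 hr2 21, pow_le_pow_left₀ (by norm_num : (0:ℝ) ≤ (193/128 : ℝ)) hl1.le 23, pow_le_pow_left₀ ht0 hr2 23, pow_le_pow_left₀ (by norm_num : (0:ℝ) ≤ (193/128 : ℝ)) hl1.le 25, pow_le_pow_left₀ ht0 hr2 25, pow_le_pow_left₀ (by norm_num : (0:ℝ) ≤ (193/128 : ℝ)) hl1.le 27, pow_le_pow_left₀ ht0 hr2 27, pow_le_pow_left₀ (by norm_num : (0:ℝ) ≤ (193/128 : ℝ)) hl1.le 29, pow_le_pow_left₀ ht0 hr2 29]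
  rcases le_or_gt t (97/64 : ℝ) with hr3|hl3
  · linarith [pow_le_pow_left₀ (by norm_num : (0:ℝ) ≤ (387/256 : ℝ)) hl2.le 5, pow_le_pow_left₀ ht0 hr3 5, pow_le_pow_left₀ (by norm_num : (0:ℝ) ≤ (387/256 : ℝ)) hl2.le 7, pow_le_pow_left₀ ht0 hr3 7, pow_le_pow_left₀ (by norm_num : (0:ℝ) ≤ (387/256 : ℝ)) hl2.le 9, pow_le_pow_left₀ ht0 hr3 9, pow_le_pow_left₀ (by norm_num : (0:ℝ) ≤ (387/256 : ℝ)) hl2.le 11, pow_le_pow_left₀ ht0 hr3 11, pow_le_pow_left₀ (by norm_num : (0:ℝ) ≤ (387/256 : ℝ)) hl2.le 13, pow_le_pow_left₀ ht0 hr3 13, pow_le_pow_left₀ (by norm_num : (0:ℝ) ≤ (387/256 : ℝ)) hl2.le 15, pow_le_pow_left₀ ht0 hr3 15, pow_le_pow_left₀ (by norm_num : (0:ℝ) ≤ (387/256 : ℝ)) hl2.le 17, pow_le_pow_left₀ ht0 hr3 17, pow_le_pow_left₀ (by norm_num : (0:ℝ) ≤ (387/256 : ℝ)) hl2.le 19,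 pow_le_pow_left₀ ht0 hr3 19, pow_le_pow_left₀ (by norm_num : (0:ℝ) ≤ (387/256 : ℝ)) hl2.le 21, pow_le_pow_left₀ ht0 hr3 21, pow_le_pow_left₀ (by norm_num : (0:ℝ) ≤ (387/256 : ℝ)) hl2.le 23, pow_le_pow_left₀ ht0 hr3 23, pow_le_pow_left₀ (by norm_num : (0:ℝ) ≤ (387/256 : ℝ)) hl2.le 25, pow_le_pow_left₀ ht0 hr3 25, pow_le_pow_left₀ (by norm_num : (0:ℝ) ≤ (387/256 : ℝ)) hl2.le 27, pow_le_pow_left₀ ht0 hr3 27, pow_le_pow_left₀ (by norm_num : (0:ℝ) ≤ (387/256 : ℝ)) hl2.le 29, pow_le_pow_left₀ ht0 hr3 29]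
  rcases le_or_gt t (389/256 : ℝ) with hr4|hl4
  · linarith [pow_le_pow_left₀ (by norm_num : (0:ℝ) ≤ (97/64 : ℝ)) hl3.le 5, pow_le_pow_left₀ ht0 hr4 5, pow_le_pow_left₀ (by norm_num : (0:ℝ) ≤ (97/64 : ℝ)) hl3.le 7, pow_le_pow_left₀ ht0 hr4 7, pow_le_pow_left₀ (by norm_num : (0:ℝ) ≤ (97/64 : ℝ)) hl3.le 9, pow_le_pow_left₀ ht0 hr4 9, pow_le_pow_left₀ (by norm_num : (0:ℝ) ≤ (97/64 : ℝ)) hl3.le 11, pow_le_pow_left₀ ht0 hr4 11, pow_le_pow_left₀ (by norm_num : (0:ℝ) ≤ (97/64 : ℝ)) hl3.le 13, pow_le_pow_left₀ ht0 hr4 13, pow_le_pow_left₀ (by norm_num : (0:ℝ) ≤ (97/64 : ℝ)) hl3.le 15, pow_le_pow_left₀ ht0 hr4 15, pow_le_pow_left₀ (by norm_num : (0:ℝ) ≤ (97/64 : ℝ)) hl3.le 17, pow_le_pow_left₀ ht0 hr4 17, pow_le_pow_left₀ (by norm_num : (0:ℝ) ≤ (97/64 : ℝ)) hl3.le 19,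 pow_le_pow_left₀ ht0 hr4 19, pow_le_pow_left₀ (by norm_num : (0:ℝ) ≤ (97/64 : ℝ)) hl3.le 21, pow_le_pow_left₀ ht0 hr4 21, pow_le_pow_left₀ (by norm_num : (0:ℝ) ≤ (97/64 : ℝ)) hl3.le 23, pow_le_pow_left₀ ht0 hr4 23, pow_le_pow_left₀ (by norm_num : (0:ℝ) ≤ (97/64 : ℝ)) hl3.le 25, pow_le_pow_left₀ ht0 hr4 25, pow_le_pow_left₀ (by norm_num : (0:ℝ) ≤ (97/64 : ℝ)) hl3.le 27, pow_le_pow_left₀ ht0 hr4 27, pow_le_pow_left₀ (by norm_num : (0:ℝ) ≤ (97/64 : ℝ)) hl3.le 29, pow_le_pow_left₀ ht0 hr4 29]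
  rcases le_or_gt t (195/128 : ℝ) with hr5|hl5
  · linarith [pow_le_pow_left₀ (by norm_num : (0:ℝ) ≤ (389/256 : ℝ)) hl4.le 5, pow_le_pow_left₀ ht0 hr5 5, pow_le_pow_left₀ (by norm_num : (0:ℝ) ≤ (389/256 : ℝ)) hl4.le 7, pow_le_pow_left₀ ht0 hr5 7, pow_le_pow_left₀ (by norm_num : (0:ℝ) ≤ (389/256 : ℝ)) hl4.le 9, pow_le_pow_left₀ ht0 hr5 9, pow_le_pow_left₀ (by norm_num : (0:ℝ) ≤ (389/256 : ℝ)) hl4.le 11, pow_le_pow_left₀ ht0 hr5 11, pow_le_pow_left₀ (by norm_num : (0:ℝ) ≤ (389/256 : ℝ)) hl4.le 13, pow_le_pow_left₀ ht0 hr5 13, pow_le_pow_left₀ (by norm_num : (0:ℝ) ≤ (389/256 : ℝ)) hl4.le 15, pow_le_pow_left₀ ht0 hr5 15, pow_le_pow_left₀ (by norm_num : (0:ℝ) ≤ (389/256 : ℝ)) hl4.le 17, pow_le_pow_left₀ ht0 hr5 17, pow_le_pow_left₀ (by norm_num : (0:ℝ) ≤ (389/256 : ℝ)) hl4.le 19,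 pow_le_pow_left₀ ht0 hr5 19, pow_le_pow_left₀ (by norm_num : (0:ℝ) ≤ (389/256 : ℝ)) hl4.le 21, pow_le_pow_left₀ ht0 hr5 21, pow_le_pow_left₀ (by norm_num : (0:ℝ) ≤ (389/256 : ℝ)) hl4.le 23, pow_le_pow_left₀ ht0 hr5 23, pow_le_pow_left₀ (by norm_num : (0:ℝ) ≤ (389/256 : ℝ)) hl4.le 25, pow_le_pow_left₀ ht0 hr5 25, pow_le_pow_left₀ (by norm_num : (0:ℝ) ≤ (389/256 : ℝ)) hl4.le 27, pow_le_pow_left₀ ht0 hr5 27, pow_le_pow_left₀ (by norm_num : (0:ℝ) ≤ (389/256 : ℝ)) hl4.le 29, pow_le_pow_left₀ ht0 hr5 29]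
  rcases le_or_gt t (391/256 : ℝ) with hr6|hl6
  · linarith [pow_le_pow_left₀ (by norm_num : (0:ℝ) ≤ (195/128 : ℝ)) hl5.le 5, pow_le_pow_left₀ ht0 hr6 5, pow_le_pow_left₀ (by norm_num : (0:ℝ) ≤ (195/128 : ℝ)) hl5.le 7, pow_le_pow_left₀ ht0 hr6 7, pow_le_pow_left₀ (by norm_num : (0:ℝ) ≤ (195/128 : ℝ)) hl5.le 9, pow_le_pow_left₀ ht0 hr6 9, pow_le_pow_left₀ (by norm_num : (0:ℝ) ≤ (195/128 : ℝ)) hl5.le 11, pow_le_pow_left₀ ht0 hr6 11, pow_le_pow_left₀ (by norm_num : (0:ℝ) ≤ (195/128 : ℝ)) hl5.le 13, pow_le_pow_left₀ ht0 hr6 13, pow_le_pow_left₀ (by norm_num : (0:ℝ) ≤ (195/128 : ℝ)) hl5.le 15, pow_le_pow_left₀ ht0 hr6 15, pow_le_pow_left₀ (by norm_num : (0:ℝ) ≤ (195/128 : ℝ)) hl5.le 17, pow_le_pow_left₀ ht0 hr6 17, pow_le_pow_left₀ (by norm_num : (0:ℝ) ≤ (195/128 : ℝ)) hl5.le 19,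 pow_le_pow_left₀ ht0 hr6 19, pow_le_pow_left₀ (by norm_num : (0:ℝ) ≤ (195/128 : ℝ)) hl5.le 21, pow_le_pow_left₀ ht0 hr6 21, pow_le_pow_left₀ (by norm_num : (0:ℝ) ≤ (195/128 : ℝ)) hl5.le 23, pow_le_pow_left₀ ht0 hr6 23, pow_le_pow_left₀ (by norm_num : (0:ℝ) ≤ (195/128 : ℝ)) hl5.le 25, pow_le_pow_left₀ ht0 hr6 25, pow_le_pow_left₀ (by norm_num : (0:ℝ) ≤ (195/128 : ℝ)) hl5.le 27, pow_le_pow_left₀ ht0 hr6 27, pow_le_pow_left₀ (by norm_num : (0:ℝ) ≤ (195/128 : ℝ)) hl5.le 29, pow_le_pow_left₀ ht0 hr6 29]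
  rcases le_or_gt t (49/32 : ℝ) with hr7|hl7
  · linarith [pow_le_pow_left₀ (by norm_num : (0:ℝ) ≤ (391/256 : ℝ)) hl6.le 5, pow_le_pow_left₀ ht0 hr7 5, pow_le_pow_left₀ (by norm_num : (0:ℝ) ≤ (391/256 : ℝ)) hl6.le 7, pow_le_pow_left₀ ht0 hr7 7, pow_le_pow_left₀ (by norm_num : (0:ℝ) ≤ (391/256 : ℝ)) hl6.le 9, pow_le_pow_left₀ ht0 hr7 9, pow_le_pow_left₀ (by norm_num : (0:ℝ) ≤ (391/256 : ℝ)) hl6.le 11, pow_le_pow_left₀ ht0 hr7 11, pow_le_pow_left₀ (by norm_num : (0:ℝ) ≤ (391/256 : ℝ)) hl6.le 13, pow_le_pow_left₀ ht0 hr7 13, pow_le_pow_left₀ (by norm_num : (0:ℝ) ≤ (391/256 : ℝ)) hl6.le 15, pow_le_pow_left₀ ht0 hr7 15, pow_le_pow_left₀ (by norm_num : (0:ℝ) ≤ (391/256 : ℝ)) hl6.le 17, pow_le_pow_left₀ ht0 hr7 17, pow_le_pow_left₀ (by norm_num : (0:ℝ) ≤ (391/256 : ℝ)) hl6.le 19,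 pow_le_pow_left₀ ht0 hr7 19, pow_le_pow_left₀ (by norm_num : (0:ℝ) ≤ (391/256 : ℝ)) hl6.le 21, pow_le_pow_left₀ ht0 hr7 21, pow_le_pow_left₀ (by norm_num : (0:ℝ) ≤ (391/256 : ℝ)) hl6.le 23, pow_le_pow_left₀ ht0 hr7 23, pow_le_pow_left₀ (by norm_num : (0:ℝ) ≤ (391/256 : ℝ)) hl6.le 25, pow_le_pow_left₀ ht0 hr7 25, pow_le_pow_left₀ (by norm_num : (0:ℝ) ≤ (391/256 : ℝ)) hl6.le 27, pow_le_pow_left₀ ht0 hr7 27, pow_le_pow_left₀ (by norm_num : (0:ℝ) ≤ (391/256 : ℝ)) hl6.le 29, pow_le_pow_left₀ ht0 hr7 29]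
  rcases le_or_gt t (393/256 : ℝ) with hr8|hl8
  · linarith [pow_le_pow_left₀ (by norm_num : (0:ℝ) ≤ (49/32 : ℝ)) hl7.le 5, pow_le_pow_left₀ ht0 hr8 5, pow_le_pow_left₀ (by norm_num : (0:ℝ) ≤ (49/32 : ℝ)) hl7.le 7, pow_le_pow_left₀ ht0 hr8 7, pow_le_pow_left₀ (by norm_num : (0:ℝ) ≤ (49/32 : ℝ)) hl7.le 9, pow_le_pow_left₀ ht0 hr8 9, pow_le_pow_left₀ (by norm_num : (0:ℝ) ≤ (49/32 : ℝ)) hl7.le 11, pow_le_pow_left₀ ht0 hr8 11, pow_le_pow_left₀ (by norm_num : (0:ℝ) ≤ (49/32 : ℝ)) hl7.le 13, pow_le_pow_left₀ ht0 hr8 13, pow_le_pow_left₀ (by norm_num : (0:ℝ) ≤ (49/32 : ℝ)) hl7.le 15, pow_le_pow_left₀ ht0 hr8 15, pow_le_pow_left₀ (by norm_num : (0:ℝ) ≤ (49/32 : ℝ)) hl7.le 17, pow_le_pow_left₀ ht0 hr8 17, pow_le_pow_left₀ (by norm_num : (0:ℝ) ≤ (49/32 : ℝ)) hl7.le 19,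 pow_le_pow_left₀ ht0 hr8 19, pow_le_pow_left₀ (by norm_num : (0:ℝ) ≤ (49/32 : ℝ)) hl7.le 21, pow_le_pow_left₀ ht0 hr8 21, pow_le_pow_left₀ (by norm_num : (0:ℝ) ≤ (49/32 : ℝ)) hl7.le 23, pow_le_pow_left₀ ht0 hr8 23, pow_le_pow_left₀ (by norm_num : (0:ℝ) ≤ (49/32 : ℝ)) hl7.le 25, pow_le_pow_left₀ ht0 hr8 25, pow_le_pow_left₀ (by norm_num : (0:ℝ) ≤ (49/32 : ℝ)) hl7.le 27, pow_le_pow_left₀ ht0 hr8 27, pow_le_pow_left₀ (by norm_num : (0:ℝ) ≤ (49/32 : ℝ)) hl7.le 29, pow_le_pow_left₀ ht0 hr8 29]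
  rcases le_or_gt t (197/128 : ℝ) with hr9|hl9
  · linarith [pow_le_pow_left₀ (by norm_num : (0:ℝ) ≤ (393/256 : ℝ)) hl8.le 5, pow_le_pow_left₀ ht0 hr9 5, pow_le_pow_left₀ (by norm_num : (0:ℝ) ≤ (393/256 : ℝ)) hl8.le 7, pow_le_pow_left₀ ht0 hr9 7, pow_le_pow_left₀ (by norm_num : (0:ℝ) ≤ (393/256 : ℝ)) hl8.le 9, pow_le_pow_left₀ ht0 hr9 9, pow_le_pow_left₀ (by norm_num : (0:ℝ) ≤ (393/256 : ℝ)) hl8.le 11, pow_le_pow_left₀ ht0 hr9 11, pow_le_pow_left₀ (by norm_num : (0:ℝ) ≤ (393/256 : ℝ)) hl8.le 13, pow_le_pow_left₀ ht0 hr9 13, pow_le_pow_left₀ (by norm_num : (0:ℝ) ≤ (393/256 : ℝ)) hl8.le 15, pow_le_pow_left₀ ht0 hr9 15, pow_le_pow_left₀ (by norm_num : (0:ℝ) ≤ (393/256 : ℝ)) hl8.le 17, pow_le_pow_left₀ ht0 hr9 17, pow_le_pow_left₀ (by norm_num : (0:ℝ) ≤ (393/256 : ℝ)) hl8.le 19,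 pow_le_pow_left₀ ht0 hr9 19, pow_le_pow_left₀ (by norm_num : (0:ℝ) ≤ (393/256 : ℝ)) hl8.le 21, pow_le_pow_left₀ ht0 hr9 21, pow_le_pow_left₀ (by norm_num : (0:ℝ) ≤ (393/256 : ℝ)) hl8.le 23, pow_le_pow_left₀ ht0 hr9 23, pow_le_pow_left₀ (by norm_num : (0:ℝ) ≤ (393/256 : ℝ)) hl8.le 25, pow_le_pow_left₀ ht0 hr9 25, pow_le_pow_left₀ (by norm_num : (0:ℝ) ≤ (393/256 : ℝ)) hl8.le 27, pow_le_pow_left₀ ht0 hr9 27, pow_le_pow_left₀ (by norm_num : (0:ℝ) ≤ (393/256 : ℝ)) hl8.le 29, pow_le_pow_left₀ ht0 hr9 29]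
  rcases le_or_gt t (395/256 : ℝ) with hr10|hl10
  · linarith [pow_le_pow_left₀ (by norm_num : (0:ℝ) ≤ (197/128 : ℝ)) hl9.le 5, pow_le_pow_left₀ ht0 hr10 5, pow_le_pow_left₀ (by norm_num : (0:ℝ) ≤ (197/128 : ℝ)) hl9.le 7, pow_le_pow_left₀ ht0 hr10 7, pow_le_pow_left₀ (by norm_num : (0:ℝ) ≤ (197/128 : ℝ)) hl9.le 9, pow_le_pow_left₀ ht0 hr10 9, pow_le_pow_left₀ (by norm_num : (0:ℝ) ≤ (197/128 : ℝ)) hl9.le 11, pow_le_pow_left₀ ht0 hr10 11, pow_le_pow_left₀ (by norm_num : (0:ℝ) ≤ (197/128 : ℝ)) hl9.le 13, pow_le_pow_left₀ ht0 hr10 13, pow_le_pow_left₀ (by norm_num : (0:ℝ) ≤ (197/128 : ℝ)) hl9.le 15, pow_le_pow_left₀ ht0 hr10 15, pow_le_pow_left₀ (by norm_num : (0:ℝ) ≤ (197/128 : ℝ)) hl9.le 17, pow_le_pow_left₀ ht0 hr10 17, pow_le_pow_left₀ (by norm_num : (0:ℝ) ≤ (197/128 : ℝ)) hl9.le 19,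 pow_le_pow_left₀ ht0 hr10 19, pow_le_pow_left₀ (by norm_num : (0:ℝ) ≤ (197/128 : ℝ)) hl9.le 21, pow_le_pow_left₀ ht0 hr10 21, pow_le_pow_left₀ (by norm_num : (0:ℝ) ≤ (197/128 : ℝ)) hl9.le 23, pow_le_pow_left₀ ht0 hr10 23, pow_le_pow_left₀ (by norm_num : (0:ℝ) ≤ (197/128 : ℝ)) hl9.le 25, pow_le_pow_left₀ ht0 hr10 25, pow_le_pow_left₀ (by norm_num : (0:ℝ) ≤ (197/128 : ℝ)) hl9.le 27, pow_le_pow_left₀ ht0 hr10 27, pow_le_pow_left₀ (by norm_num : (0:ℝ) ≤ (197/128 : ℝ)) hl9.le 29, pow_le_pow_left₀ ht0 hr10 29]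
  rcases le_or_gt t (99/64 : ℝ) with hr11|hl11
  · linarith [pow_le_pow_left₀ (by norm_num : (0:ℝ) ≤ (395/256 : ℝ)) hl10.le 5, pow_le_pow_left₀ ht0 hr11 5, pow_le_pow_left₀ (by norm_num : (0:ℝ) ≤ (395/256 : ℝ)) hl10.le 7, pow_le_pow_left₀ ht0 hr11 7, pow_le_pow_left₀ (by norm_num : (0:ℝ) ≤ (395/256 : ℝ)) hl10.le 9, pow_le_pow_left₀ ht0 hr11 9, pow_le_pow_left₀ (by norm_num : (0:ℝ) ≤ (395/256 : ℝ)) hl10.le 11, pow_le_pow_left₀ ht0 hr11 11, pow_le_pow_left₀ (by norm_num : (0:ℝ) ≤ (395/256 : ℝ)) hl10.le 13, pow_le_pow_left₀ ht0 hr11 13, pow_le_pow_left₀ (by norm_num : (0:ℝ) ≤ (395/256 : ℝ)) hl10.le 15, pow_le_pow_left₀ ht0 hr11 15, pow_le_pow_left₀ (by norm_num : (0:ℝ) ≤ (395/256 : ℝ)) hl10.le 17, pow_le_pow_left₀ ht0 hr11 17, pow_le_pow_left₀ (by norm_num : (0:ℝ) ≤ (395/256 : ℝ)) hl10.le 19,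 pow_le_pow_left₀ ht0 hr11 19, pow_le_pow_left₀ (by norm_num : (0:ℝ) ≤ (395/256 : ℝ)) hl10.le 21, pow_le_pow_left₀ ht0 hr11 21, pow_le_pow_left₀ (by norm_num : (0:ℝ) ≤ (395/256 : ℝ)) hl10.le 23, pow_le_pow_left₀ ht0 hr11 23, pow_le_pow_left₀ (by norm_num : (0:ℝ) ≤ (395/256 : ℝ)) hl10.le 25, pow_le_pow_left₀ ht0 hr11 25, pow_le_pow_left₀ (by norm_num : (0:ℝ) ≤ (395/256 : ℝ)) hl10.le 27, pow_le_pow_left₀ ht0 hr11 27, pow_le_pow_left₀ (by norm_num : (0:ℝ) ≤ (395/256 : ℝ)) hl10.le 29, pow_le_pow_left₀ ht0 hr11 29]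
  rcases le_or_gt t (397/256 : ℝ) with hr12|hl12
  · linarith [pow_le_pow_left₀ (by norm_num : (0:ℝ) ≤ (99/64 : ℝ)) hl11.le 5, pow_le_pow_left₀ ht0 hr12 5, pow_le_pow_left₀ (by norm_num : (0:ℝ) ≤ (99/64 : ℝ)) hl11.le 7, pow_le_pow_left₀ ht0 hr12 7, pow_le_pow_left₀ (by norm_num : (0:ℝ) ≤ (99/64 : ℝ)) hl11.le 9, pow_le_pow_left₀ ht0 hr12 9, pow_le_pow_left₀ (by norm_num : (0:ℝ) ≤ (99/64 : ℝ)) hl11.le 11, pow_le_pow_left₀ ht0 hr12 11, pow_le_pow_left₀ (by norm_num : (0:ℝ) ≤ (99/64 : ℝ)) hl11.le 13, pow_le_pow_left₀ ht0 hr12 13, pow_le_pow_left₀ (by norm_num : (0:ℝ) ≤ (99/64 : ℝ)) hl11.le 15, pow_le_pow_left₀ ht0 hr12 15, pow_le_pow_left₀ (by norm_num : (0:ℝ) ≤ (99/64 : ℝ)) hl11.le 17, pow_le_pow_left₀ ht0 hr12 17, pow_le_pow_left₀ (by norm_num : (0:ℝ) ≤ (99/64 : ℝ)) hl11.le 19,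 pow_le_pow_left₀ ht0 hr12 19, pow_le_pow_left₀ (by norm_num : (0:ℝ) ≤ (99/64 : ℝ)) hl11.le 21, pow_le_pow_left₀ ht0 hr12 21, pow_le_pow_left₀ (by norm_num : (0:ℝ) ≤ (99/64 : ℝ)) hl11.le 23, pow_le_pow_left₀ ht0 hr12 23, pow_le_pow_left₀ (by norm_num : (0:ℝ) ≤ (99/64 : ℝ)) hl11.le 25, pow_le_pow_left₀ ht0 hr12 25, pow_le_pow_left₀ (by norm_num : (0:ℝ) ≤ (99/64 : ℝ)) hl11.le 27, pow_le_pow_left₀ ht0 hr12 27, pow_le_pow_left₀ (by norm_num : (0:ℝ) ≤ (99/64 : ℝ)) hl11.le 29, pow_le_pow_left₀ ht0 hr12 29]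
  rcases le_or_gt t (199/128 : ℝ) with hr13|hl13
  · linarith [pow_le_pow_left₀ (by norm_num : (0:ℝ) ≤ (397/256 : ℝ)) hl12.le 5, pow_le_pow_left₀ ht0 hr13 5, pow_le_pow_left₀ (by norm_num : (0:ℝ) ≤ (397/256 : ℝ)) hl12.le 7, pow_le_pow_left₀ ht0 hr13 7, pow_le_pow_left₀ (by norm_num : (0:ℝ) ≤ (397/256 : ℝ)) hl12.le 9, pow_le_pow_left₀ ht0 hr13 9, pow_le_pow_left₀ (by norm_num : (0:ℝ) ≤ (397/256 : ℝ)) hl12.le 11, pow_le_pow_left₀ ht0 hr13 11, pow_le_pow_left₀ (by norm_num : (0:ℝ) ≤ (397/256 : ℝ)) hl12.le 13, pow_le_pow_left₀ ht0 hr13 13, pow_le_pow_left₀ (by norm_num : (0:ℝ) ≤ (397/256 : ℝ)) hl12.le 15, pow_le_pow_left₀ ht0 hr13 15, pow_le_pow_left₀ (by norm_num : (0:ℝ) ≤ (397/256 : ℝ)) hl12.le 17, pow_le_pow_left₀ ht0 hr13 17, pow_le_pow_left₀ (by norm_num : (0:ℝ) ≤ (397/256 : ℝ)) hl12.le 19,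 pow_le_pow_left₀ ht0 hr13 19, pow_le_pow_left₀ (by norm_num : (0:ℝ) ≤ (397/256 : ℝ)) hl12.le 21, pow_le_pow_left₀ ht0 hr13 21, pow_le_pow_left₀ (by norm_num : (0:ℝ) ≤ (397/256 : ℝ)) hl12.le 23, pow_le_pow_left₀ ht0 hr13 23, pow_le_pow_left₀ (by norm_num : (0:ℝ) ≤ (397/256 : ℝ)) hl12.le 25, pow_le_pow_left₀ ht0 hr13 25, pow_le_pow_left₀ (by norm_num : (0:ℝ) ≤ (397/256 : ℝ)) hl12.le 27, pow_le_pow_left₀ ht0 hr13 27, pow_le_pow_left₀ (by norm_num : (0:ℝ) ≤ (397/256 : ℝ)) hl12.le 29, pow_le_pow_left₀ ht0 hr13 29]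
  rcases le_or_gt t (399/256 : ℝ) with hr14|hl14
  · linarith [pow_le_pow_left₀ (by norm_num : (0:ℝ) ≤ (199/128 : ℝ)) hl13.le 5, pow_le_pow_left₀ ht0 hr14 5, pow_le_pow_left₀ (by norm_num : (0:ℝ) ≤ (199/128 : ℝ)) hl13.le 7, pow_le_pow_left₀ ht0 hr14 7, pow_le_pow_left₀ (by norm_num : (0:ℝ) ≤ (199/128 : ℝ)) hl13.le 9, pow_le_pow_left₀ ht0 hr14 9, pow_le_pow_left₀ (by norm_num : (0:ℝ) ≤ (199/128 : ℝ)) hl13.le 11, pow_le_pow_left₀ ht0 hr14 11, pow_le_pow_left₀ (by norm_num : (0:ℝ) ≤ (199/128 : ℝ)) hl13.le 13, pow_le_pow_left₀ ht0 hr14 13, pow_le_pow_left₀ (by norm_num : (0:ℝ) ≤ (199/128 : ℝ)) hl13.le 15, pow_le_pow_left₀ ht0 hr14 15, pow_le_pow_left₀ (by norm_num : (0:ℝ) ≤ (199/128 : ℝ)) hl13.le 17, pow_le_pow_left₀ ht0 hr14 17, pow_le_pow_left₀ (by norm_num : (0:ℝ) ≤ (199/128 : ℝ)) hl13.le 19,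 pow_le_pow_left₀ ht0 hr14 19, pow_le_pow_left₀ (by norm_num : (0:ℝ) ≤ (199/128 : ℝ)) hl13.le 21, pow_le_pow_left₀ ht0 hr14 21, pow_le_pow_left₀ (by norm_num : (0:ℝ) ≤ (199/128 : ℝ)) hl13.le 23, pow_le_pow_left₀ ht0 hr14 23, pow_le_pow_left₀ (by norm_num : (0:ℝ) ≤ (199/128 : ℝ)) hl13.le 25, pow_le_pow_left₀ ht0 hr14 25, pow_le_pow_left₀ (by norm_num : (0:ℝ) ≤ (199/128 : ℝ)) hl13.le 27, pow_le_pow_left₀ ht0 hr14 27, pow_le_pow_left₀ (by norm_num : (0:ℝ) ≤ (199/128 : ℝ)) hl13.le 29, pow_le_pow_left₀ ht0 hr14 29]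
  rcases le_or_gt t (12517561/8000000 : ℝ) with hr15|hl15
  · linarith [pow_le_pow_left₀ (by norm_num : (0:ℝ) ≤ (399/256 : ℝ)) hl14.le 5, pow_le_pow_left₀ ht0 hr15 5, pow_le_pow_left₀ (by norm_num : (0:ℝ) ≤ (399/256 : ℝ)) hl14.le 7, pow_le_pow_left₀ ht0 hr15 7, pow_le_pow_left₀ (by norm_num : (0:ℝ) ≤ (399/256 : ℝ)) hl14.le 9, pow_le_pow_left₀ ht0 hr15 9, pow_le_pow_left₀ (by norm_num : (0:ℝ) ≤ (399/256 : ℝ)) hl14.le 11, pow_le_pow_left₀ ht0 hr15 11, pow_le_pow_left₀ (by norm_num : (0:ℝ) ≤ (399/256 : ℝ)) hl14.le 13, pow_le_pow_left₀ ht0 hr15 13, pow_le_pow_left₀ (by norm_num : (0:ℝ) ≤ (399/256 : ℝ)) hl14.le 15, pow_le_pow_left₀ ht0 hr15 15, pow_le_pow_left₀ (by norm_num : (0:ℝ) ≤ (399/256 : ℝ)) hl14.le 17, pow_le_pow_left₀ ht0 hr15 17, pow_le_pow_left₀ (by norm_num : (0:ℝ) ≤ (399/256 : ℝ)) hl14.le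 19, pow_le_pow_left₀ ht0 hr15 19, pow_le_pow_left₀ (by norm_num : (0:ℝ) ≤ (399/256 : ℝ)) hl14.le 21, pow_le_pow_left₀ ht0 hr15 21, pow_le_pow_left₀ (by norm_num : (0:ℝ) ≤ (399/256 : ℝ)) hl14.le 23, pow_le_pow_left₀ ht0 hr15 23, pow_le_pow_left₀ (by norm_num : (0:ℝ) ≤ (399/256 : ℝ)) hl14.le 25, pow_le_pow_left₀ ht0 hr15 25, pow_le_pow_left₀ (by norm_num : (0:ℝ) ≤ (399/256 : ℝ)) hl14.le 27, pow_le_pow_left₀ ht0 hr15 27, pow_le_pow_left₀ (by norm_num : (0:ℝ) ≤ (399/256 : ℝ)) hl14.le 29, pow_le_pow_left₀ ht0 hr15 29]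
  linarith [pow_le_pow_left₀ (by norm_num : (0:ℝ) ≤ (12517561/8000000 : ℝ)) hl15.le 5, pow_le_pow_left₀ ht0 h1 5, pow_le_pow_left₀ (by norm_num : (0:ℝ) ≤ (12517561/8000000 : ℝ)) hl15.le 7, pow_le_pow_left₀ ht0 h1 7, pow_le_pow_left₀ (by norm_num : (0:ℝ) ≤ (12517561/8000000 : ℝ)) hl15.le 9, pow_le_pow_left₀ ht0 h1 9, pow_le_pow_left₀ (by norm_num : (0:ℝ) ≤ (12517561/8000000 : ℝ)) hl15.le 11, pow_le_pow_left₀ ht0 h1 11, pow_le_pow_left₀ (by norm_num : (0:ℝ) ≤ (12517561/8000000 : ℝ)) hl15.le 13, pow_le_pow_left₀ ht0 h1 13, pow_le_pow_left₀ (by norm_num : (0:ℝ) ≤ (12517561/8000000 : ℝ)) hl15.le 15, pow_le_pow_left₀ ht0 h1 15, pow_le_pow_left₀ (by norm_num : (0:ℝ) ≤ (12517561/8000000 : ℝ)) hl15.le 17, pow_le_pow_left₀ ht0 h1 17, pow_le_pow_left₀ (by norm_num : (0:ℝ) ≤ (12517561/8000000 : ℝ)) hl15.le 19, pow_le_pow_left₀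 ht0 h1 19, pow_le_pow_left₀ (by norm_num : (0:ℝ) ≤ (12517561/8000000 : ℝ)) hl15.le 21, pow_le_pow_left₀ ht0 h1 21, pow_le_pow_left₀ (by norm_num : (0:ℝ) ≤ (12517561/8000000 : ℝ)) hl15.le 23, pow_le_pow_left₀ ht0 h1 23, pow_le_pow_left₀ (by norm_num : (0:ℝ) ≤ (12517561/8000000 : ℝ)) hl15.le 25, pow_le_pow_left₀ ht0 h1 25, pow_le_pow_left₀ (by norm_num : (0:ℝ) ≤ (12517561/8000000 : ℝ)) hl15.le 27, pow_le_pow_left₀ ht0 h1 27, pow_le_pow_left₀ (by norm_num : (0:ℝ) ≤ (12517561/8000000 : ℝ)) hl15.le 29, pow_le_pow_left₀ ht0 h1 29]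
lemma key (x : ℝ) (hx0 : 0 < x) (hx2 : x < π / 2) :
    x / Real.sin x + ((x / 2) / Real.tan (x / 2)) ^ 2 <
      2 + ((π ^ 2 + 8 * π - 32) / (2 * π ^ 3)) * x ^ 3 * Real.sin x := by
  have hpi6l := Real.pi_gt_d6
  have hpi6u := Real.pi_lt_d6
  have hpip := Real.pi_pos
  set K : ℝ := (π ^ 2 + 8 * π - 32) / (2 * π ^ 3) with hK
  clear_value K
  have hpi3 : (0:ℝ) < 2 * π ^ 3 := by positivity
  have hKlo : (484/10000 : ℝ) ≤ K := by
    rw [hK, le_div_iff₀ hpi3]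
    nlinarith [hpi6l, hpi6u, sq_nonneg (π - 3.141592), sq_nonneg (π - 3.141593)]
  have hKhi : K ≤ (4842/100000 : ℝ) := by
    rw [hK, div_le_iff₀ hpi3]
    nlinarith [hpi6l, hpi6u, sq_nonneg (π - 3.141592), sq_nonneg (π - 3.141593)]
  have hK0 : (0:ℝ) ≤ K := le_trans (by norm_num) hKlo
  have hNpos : 0 < 8*Real.sin x^2 + 4*K*(x^3*Real.sin x^3) - 4*(x*Real.sin x)
      - x^2*(1+Real.cos x)^2 := by
    rcases le_or_gt x (3/2) with hx32 | hx32
    · -- region (0, 3/2]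
      have hxx : (0:ℝ) ≤ x := hx0.le
      have hsl := sin_lb7 x hxx
      have hsu := sin_ub9 x hxx
      have hcu := cos_ub8 x hxx
      have hs0 : 0 ≤ Real.sin x := Real.sin_nonneg_of_nonneg_of_le_pi hxx
        (by nlinarith [Real.pi_gt_three])
      have hx2b : x^2 ≤ 9/4 := by nlinarith
      have hpl0 : 0 ≤ (x - x^3/6 + x^5/120 - x^7/5040) := by
        nlinarith [pow_le_pow_left₀ hxx hx32 3, pow_le_pow_left₀ hxx hx32 5,
          pow_le_pow_left₀ hxx hx32 7, pow_nonneg hxx 5, pow_nonneg hxx 7]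
      have h1c : 0 ≤ 1 + Real.cos x := by nlinarith [Real.neg_one_le_cos x]
      have hS := Spos (x^2) (sq_nonneg x) hx2b
      have hx6 : 0 < x^6 := by positivity
      have e1 : 8*(x - x^3/6 + x^5/120 - x^7/5040)^2 ≤ 8*Real.sin x^2 := by
        have := pow_le_pow_left₀ hpl0 hsl 2; linarith
      have e2 : (484/10000 : ℝ)*(x^3*(x - x^3/6 + x^5/120 - x^7/5040)^3) ≤ K*(x^3*Real.sin x^3) := by
        apply mul_le_mul hKlo ?_ ?_ hK0
        · exact mul_le_mul_of_nonneg_left (pow_le_pow_left₀ hpl0 hsl 3) (by positivity)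
        · exact mul_nonneg (by positivity) (pow_nonneg hpl0 3)
      have e3 : 4*(x*Real.sin x) ≤ 4*(x*(x - x^3/6 + x^5/120 - x^7/5040 + x^9/362880)) := by
        have := mul_le_mul_of_nonneg_left hsu hxx; linarith
      have e4 : x^2*(1+Real.cos x)^2 ≤ x^2*(1+(1 - x^2/2 + x^4/24 - x^6/720 + x^8/40320))^2 := by
        have h := pow_le_pow_left₀ h1c (by linarith : 1+Real.cos x ≤ 1+(1 - x^2/2 + x^4/24 - x^6/720 + x^8/40320)) 2
        exact mul_le_mul_of_nonneg_left h (sq_nonneg x)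
      nlinarith [mul_pos hx6 hS, e1, e2, e3, e4]
    · -- region (3/2, π/2)
      have hanti : StrictAntiOn (fun y : ℝ => 8*Real.sin y^2 + 4*K*(y^3*Real.sin y^3)
          - 4*(y*Real.sin y) - y^2*(1+Real.cos y)^2) (Set.Icc (3/2) (π/2)) := by
        apply strictAntiOn_of_deriv_neg (convex_Icc _ _)
        · exact Continuous.continuousOn (by fun_prop)
        · intro t ht
          rw [interior_Icc] at ht
          obtain ⟨ht1, ht2⟩ := ht
          have hNd : HasDerivAt (fun y : ℝ => 8*Real.sin y^2 + 4*K*(y^3*Real.sin y^3)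
              - 4*(y*Real.sin y) - y^2*(1+Real.cos y)^2)
              (16*(Real.sin t*Real.cos t) + 12*K*(t^2*Real.sin t^3)
                + 12*K*(t^3*Real.sin t^2*Real.cos t) - 4*Real.sin t - 4*(t*Real.cos t)
                - 2*(t*(1+Real.cos t)^2) + 2*(t^2*((1+Real.cos t)*Real.sin t))) t := by
            have hsin := Real.hasDerivAt_sin t
            have hcos := Real.hasDerivAt_cos t
            have h := ((((hsin.pow 2).const_mul (8:ℝ)).add
              (((hasDerivAt_pow 3 t).mul (hsin.pow 3)).const_mul (4*K))).sub
              (((hasDerivAt_id t).mul hsin).const_mul (4:ℝ))).sub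
              ((hasDerivAt_pow 2 t).mul (((hasDerivAt_const t (1:ℝ)).add hcos).pow 2))
            refine h.congr_deriv ?_
            try simp only [id_eq, Pi.add_apply, Pi.pow_apply]
            push_cast; ring
          rw [hNd.deriv]
          have ht0 : (0:ℝ) ≤ t := by linarith
          have htl : (3/2 : ℝ) ≤ t := ht1.le
          have htr : t ≤ (15707965/10000000 : ℝ) := by nlinarith [hpi6u]
          have hsl := sin_lb7 t ht0
          have hsu := sin_ub9 t ht0
          have hcu := cos_ub8 t ht0
          have hcl := cos_lb10 t ht0
          have hs0 : 0 ≤ Real.sin t := Real.sin_nonneg_of_nonneg_of_le_pi ht0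
            (by nlinarith [Real.pi_gt_three])
          have hc0 : 0 ≤ Real.cos t := Real.cos_nonneg_of_mem_Icc ⟨by linarith, ht2.le⟩
          have hpu0 : 0 ≤ (t - t^3/6 + t^5/120 - t^7/5040 + t^9/362880) := le_trans hs0 hsu
          have hpcu0 : 0 ≤ (1 - t^2/2 + t^4/24 - t^6/720 + t^8/40320) := le_trans hc0 hcu
          have h1pcl : 0 ≤ 1 + (1 - t^2/2 + t^4/24 - t^6/720 + t^8/40320 - t^10/3628800) := by
            nlinarith [pow_le_pow_left₀ ht0 htr 2, pow_le_pow_left₀ ht0 htr 6,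
              pow_le_pow_left₀ ht0 htr 10, pow_nonneg ht0 4, pow_nonneg ht0 8]
          have hA : 16*(Real.sin t*Real.cos t) ≤ 16*((t - t^3/6 + t^5/120 - t^7/5040 + t^9/362880)*(1 - t^2/2 + t^4/24 - t^6/720 + t^8/40320)) := by
            have := mul_le_mul hsu hcu hc0 hpu0; linarith
          have hB : K*(t^2*Real.sin t^3) ≤ (4842/100000 : ℝ)*(t^2*(t - t^3/6 + t^5/120 - t^7/5040 + t^9/362880)^3) := by
            apply mul_le_mul hKhi ?_ ?_ (by norm_num)
            · exact mul_le_mul_of_nonneg_left (pow_le_pow_left₀ hs0 hsu 3) (sq_nonneg t)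
            · exact mul_nonneg (sq_nonneg t) (pow_nonneg hs0 3)
          have hC : K*(t^3*Real.sin t^2*Real.cos t) ≤ (4842/100000 : ℝ)*(t^3*(t - t^3/6 + t^5/120 - t^7/5040 + t^9/362880)^2*(1 - t^2/2 + t^4/24 - t^6/720 + t^8/40320)) := by
            apply mul_le_mul hKhi ?_ ?_ (by norm_num)
            · have h1 : Real.sin t^2*Real.cos t ≤ (t - t^3/6 + t^5/120 - t^7/5040 + t^9/362880)^2*(1 - t^2/2 + t^4/24 - t^6/720 + t^8/40320) :=
                mul_le_mul (pow_le_pow_left₀ hs0 hsu 2) hcu hc0 (pow_nonneg hpu0 2)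
              calc t^3*Real.sin t^2*Real.cos t = t^3*(Real.sin t^2*Real.cos t) := by ring
              _ ≤ t^3*((t - t^3/6 + t^5/120 - t^7/5040 + t^9/362880)^2*(1 - t^2/2 + t^4/24 - t^6/720 + t^8/40320)) := mul_le_mul_of_nonneg_left h1 (by positivity)
              _ = t^3*(t - t^3/6 + t^5/120 - t^7/5040 + t^9/362880)^2*(1 - t^2/2 + t^4/24 - t^6/720 + t^8/40320) := by ring
            · exact mul_nonneg (mul_nonneg (pow_nonneg ht0 3) (sq_nonneg _)) hc0
          have hE : t*(1 - t^2/2 + t^4/24 - t^6/720 + t^8/40320 - t^10/3628800) ≤ t*Real.cos t := mul_le_mul_of_nonneg_left hcl ht0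
          have hF2 : t*(1+(1 - t^2/2 + t^4/24 - t^6/720 + t^8/40320 - t^10/3628800))^2 ≤ t*(1+Real.cos t)^2 := by
            have h := pow_le_pow_left₀ h1pcl (by linarith : 1+(1 - t^2/2 + t^4/24 - t^6/720 + t^8/40320 - t^10/3628800) ≤ 1+Real.cos t) 2
            exact mul_le_mul_of_nonneg_left h ht0
          have hG : t^2*((1+Real.cos t)*Real.sin t) ≤ t^2*((1+(1 - t^2/2 + t^4/24 - t^6/720 + t^8/40320))*(t - t^3/6 + t^5/120 - t^7/5040 + t^9/362880)) := by
            have h1 : (1+Real.cos t)*Real.sin t ≤ (1+(1 - t^2/2 + t^4/24 - t^6/720 + t^8/40320))*(t - t^3/6 + t^5/120 - t^7/5040 + t^9/362880) :=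
              mul_le_mul (by linarith) hsu hs0 (by linarith)
            exact mul_le_mul_of_nonneg_left h1 (sq_nonneg t)
          have hW := Wneg t htl htr
          linarith [hA, hB, hC, hsl, hE, hF2, hG, hW]
      have hxC : x ∈ Set.Icc (3/2 : ℝ) (π/2) := ⟨hx32.le, hx2.le⟩
      have hp2 : (π/2 : ℝ) ∈ Set.Icc (3/2 : ℝ) (π/2) := ⟨by nlinarith [hpi6l], le_rfl⟩
      have h := hanti hxC hp2 hx2
      simp only at h
      have hFpi : 8*Real.sin (π/2)^2 + 4*K*((π/2)^3*Real.sin (π/2)^3) - 4*((π/2)*Real.sin (π/2))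
          - (π/2)^2*(1+Real.cos (π/2))^2 = 0 := by
        rw [Real.sin_pi_div_two, Real.cos_pi_div_two, hK]
        field_simp
        ring
      linarith [h, hFpi]
  -- conversion to the stated inequality
  have hs2 : 0 < Real.sin (x/2) :=
    Real.sin_pos_of_pos_of_lt_pi (by linarith) (by nlinarith [Real.pi_gt_three])
  have hc2 : 0 < Real.cos (x/2) := Real.cos_pos_of_mem_Ioo
    ⟨by nlinarith [Real.pi_gt_three], by nlinarith [Real.pi_gt_three]⟩
  have hsx : Real.sin x = 2*Real.sin (x/2)*Real.cos (x/2) := by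
    have h := Real.sin_two_mul (x/2)
    rw [show 2*(x/2) = x by ring] at h
    exact h
  have hcx : Real.cos x = 2*Real.cos (x/2)^2 - 1 := by
    have h := Real.cos_two_mul (x/2)
    rw [show 2*(x/2) = x by ring] at h
    exact h
  have htan : Real.tan (x/2) = Real.sin (x/2)/Real.cos (x/2) := Real.tan_eq_sin_div_cos _
  rw [hsx, hcx] at hNpos
  rw [htan, hsx]
  rw [← sub_pos]
  have hden : (0:ℝ) < 4*(2*Real.sin (x/2)*Real.cos (x/2))^2 := by
    have := mul_pos hs2 hc2
    nlinarith [this]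
  have hid : 2 + K*x^3*(2*Real.sin (x/2)*Real.cos (x/2)) - (x/(2*Real.sin (x/2)*Real.cos (x/2)) + ((x/2)/(Real.sin (x/2)/Real.cos (x/2)))^2)
      = (8*(2*Real.sin (x/2)*Real.cos (x/2))^2 + 4*K*(x^3*(2*Real.sin (x/2)*Real.cos (x/2))^3) - 4*(x*(2*Real.sin (x/2)*Real.cos (x/2))) - x^2*(1+(2*Real.cos (x/2)^2-1))^2) / (4*(2*Real.sin (x/2)*Real.cos (x/2))^2) := by
    field_simp
    ring
  rw [hid]
  exact div_pos hNpos hden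

theorem wilker_upper (x : ℝ) (h1 : 0 < |x|) (h2 : |x| < π / 2) :
    x / Real.sin x + ((x / 2) / Real.tan (x / 2)) ^ 2 <
      2 + ((π ^ 2 + 8 * π - 32) / (2 * π ^ 3)) * x ^ 3 * Real.sin x := by
  rcases (abs_pos.mp h1).lt_or_gt with hneg | hpos
  · have h2' : -x < π/2 := by rwa [abs_of_neg hneg] at h2
    have hkey := key (-x) (by linarith) h2'
    rw [show ((-x)/2) = -(x/2) by ring] at hkey
    rw [Real.sin_neg, Real.tan_neg] at hkey
    simp only [neg_div_neg_eq] at hkey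
    have hrw : ((π ^ 2 + 8 * π - 32) / (2 * π ^ 3)) * (-x) ^ 3 * (-Real.sin x)
        = ((π ^ 2 + 8 * π - 32) / (2 * π ^ 3)) * x ^ 3 * Real.sin x := by ring
    rw [hrw] at hkey
    exact hkey
  · have h2' : x < π/2 := by rwa [abs_of_pos hpos] at h2
    exact key x hpos h2'
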